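/- Let n ≥ 5 be odd and G = L(K_n) the line graph of the complete graph K_n. Then ω(G) + 1 = n < codeg(P_G) = χ(G) + 1 = n + 1. -/

import Mathlib

open Finset

noncomputable section

/-- The dilation `kP` of a set `P ⊆ ℝ^ι`. -/
def dilate {ι : Type*} (k : ℕ) (P : Set (ι → ℝ)) : Set (ι → ℝ) :=
  (fun x => (k : ℝ) • x) '' P

/-- A point of `ℝ^ι` is a lattice point if all its coordinates are integers. -/
def IsLatticePt {ι : Type*} (x : ι → ℝ) : Prop := ∀ i, ∃ m : ℤ, x i = m

/-- The codegree of a (full-dimensional lattice) polytope `P ⊆ ℝ^ι`: the smallest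
positive integer `k` such that the interior of `kP` contains a lattice point. -/
def codeg {ι : Type*} (P : Set (ι → ℝ)) : ℕ :=
  sInf {k | 0 < k ∧ ∃ x, IsLatticePt x ∧ x ∈ interior (dilate k P)}

/-- The stable set polytope of a simple graph: the convex hull of the indicator
vectors of the stable (independent) sets of `G`. -/
def stablePolytope {V : Type*} (G : SimpleGraph V) : Set (V → ℝ) :=
  convexHull ℝ {x | ∃ S : Set V, (∀ u ∈ S, ∀ v ∈ S, ¬ G.Adj u v) ∧
    x = S.indicator (fun _ => (1 : ℝ))}

open SimpleGraph

section Aux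

variable {n : ℕ}

abbrev EE (n : ℕ) := (⊤ : SimpleGraph (Fin n)).edgeSet

lemma edge_exists (e : EE n) : ∃ a b : Fin n, a ≠ b ∧ (e : Sym2 (Fin n)) = s(a, b) := by
  obtain ⟨e, he⟩ := e
  induction e with
  | h x y => exact ⟨x, y, by simpa using he, rfl⟩

lemma mem_pair_other {a : Fin n} (e : EE n) (h : a ∈ (e : Sym2 (Fin n))) :
    ∃ b : Fin n, b ≠ a ∧ (e : Sym2 (Fin n)) = s(a, b) := by
  refine ⟨Sym2.Mem.other h, ?_, (Sym2.other_spec h).symm⟩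
  intro hb
  have h2 := e.2
  have h3 : (e : Sym2 (Fin n)) = s(a, a) := by rw [← Sym2.other_spec h, hb]
  rw [h3, SimpleGraph.mem_edgeSet] at h2
  exact h2.ne rfl

lemma adj_iff {e f : EE n} :
    (⊤ : SimpleGraph (Fin n)).lineGraph.Adj e f ↔ e ≠ f ∧ ∃ v, v ∈ (e : Sym2 (Fin n)) ∧ v ∈ (f : Sym2 (Fin n)) :=
  lineGraph_adj_iff_exists

lemma eq_of_two_mem {a b : Fin n} (hab : a ≠ b) (e : EE n) (ha : a ∈ (e : Sym2 (Fin n)))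
    (hb : b ∈ (e : Sym2 (Fin n))) : (e : Sym2 (Fin n)) = s(a, b) := by
  obtain ⟨c, hc, hec⟩ := mem_pair_other e ha
  rw [hec] at hb ⊢
  rcases Sym2.mem_iff.1 hb with h | h
  · exact absurd h.symm hab
  · rw [h]

lemma clique_le (hn : 5 ≤ n) (s : Finset (EE n))
    (hs : (⊤ : SimpleGraph (Fin n)).lineGraph.IsClique s) : s.card ≤ n - 1 := by
  by_cases hstar : ∃ a : Fin n, ∀ e ∈ s, a ∈ (e : Sym2 (Fin n))
  · obtain ⟨a, ha⟩ := hstar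
    classical
    have : s.card ≤ (Finset.univ.erase a).card := by
      refine Finset.card_le_card_of_injOn (fun e => if h : a ∈ (e : Sym2 (Fin n)) then Sym2.Mem.other h else a) ?_ ?_
      · intro e he
        have hmem := ha e he
        simp only [hmem, dif_pos]
        rcases mem_pair_other e hmem with ⟨b, hb, heb⟩
        have : Sym2.Mem.other hmem ≠ a := by
          intro hcon
          obtain ⟨c, hc, hec⟩ := mem_pair_other e hmem
          have := Sym2.other_spec hmem
          rw [hcon] at this
          have h2 := e.2
          rw [← this, SimpleGraph.mem_edgeSet] at h2
          exact h2.ne rfl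
        exact Finset.mem_erase.2 ⟨this, Finset.mem_univ _⟩
      · intro e he f hf hef
        have hae := ha e he; have haf := ha f hf
        simp only [hae, haf, dif_pos] at hef
        apply Subtype.ext
        rw [← Sym2.other_spec hae, ← Sym2.other_spec haf, hef]
    simpa using this
  · -- non-star: card ≤ 3
    have h3 : s.card ≤ 3 := by
      by_contra hc
      push_neg at hc
      have hpos : 0 < s.card := by omega
      obtain ⟨e₁, he₁⟩ := Finset.card_pos.1 hpos
      obtain ⟨a, b, hab, hab'⟩ := edge_exists e₁
      push_neg at hstar
      obtain ⟨f, hf, haf⟩ := hstar a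
      obtain ⟨g, hg, hbg⟩ := hstar b
      have hae₁ : a ∈ (e₁ : Sym2 (Fin n)) := by rw [hab']; simp
      have hbe₁ : b ∈ (e₁ : Sym2 (Fin n)) := by rw [hab']; simp
      have hfe₁ : f ≠ e₁ := fun h => haf (h ▸ hae₁)
      have hge₁ : g ≠ e₁ := fun h => hbg (h ▸ hbe₁)
      -- b ∈ f
      have hbf : b ∈ (f : Sym2 (Fin n)) := by
        obtain ⟨_, v, hv1, hv2⟩ := adj_iff.1 (hs hf he₁ hfe₁)
        rw [hab'] at hv2
        rcases Sym2.mem_iff.1 hv2 with h | h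
        · exact absurd (h ▸ hv1) haf
        · exact h ▸ hv1
      have hag : a ∈ (g : Sym2 (Fin n)) := by
        obtain ⟨_, v, hv1, hv2⟩ := adj_iff.1 (hs hg he₁ hge₁)
        rw [hab'] at hv2
        rcases Sym2.mem_iff.1 hv2 with h | h
        · exact h ▸ hv1
        · exact absurd (h ▸ hv1) hbg
      have hfg : f ≠ g := fun h => haf (h ▸ hag)
      obtain ⟨x, hxb, hfx⟩ := mem_pair_other f hbf
      obtain ⟨y, hyb, hgy⟩ := mem_pair_other g hag
      -- common vertex of f and g is x = y =: c
      obtain ⟨_, w, hwf, hwg⟩ := adj_iff.1 (hs hf hg hfg)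
      have hwx : w = x := by
        rw [hfx] at hwf
        rcases Sym2.mem_iff.1 hwf with h | h
        · exact absurd (h ▸ hwg) hbg
        · exact h
      have hwy : w = y := by
        rw [hgy] at hwg
        rcases Sym2.mem_iff.1 hwg with h | h
        · exact absurd (h ▸ hwf) haf
        · exact h
      set c := x with hc'
      have hxy : y = c := by rw [← hwx, hwy]
      have hca : c ≠ a := by
        intro h
        exact haf (by rw [hfx, h]; simp)
      have hcb : c ≠ b := hxb
      -- get a fourth edge
      have : ({e₁, f, g} : Finset (EE n)).card ≤ 3 := by
        apply le_trans (Finset.card_insert_le _ _)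
        have h2 := Finset.card_insert_le f ({g} : Finset (EE n))
        simp only [Finset.card_singleton] at h2 ⊢
        omega
      obtain ⟨h, hh, hh3⟩ : ∃ h ∈ s, h ∉ ({e₁, f, g} : Finset (EE n)) := by
        by_contra hcon
        push_neg at hcon
        exact absurd (Finset.card_le_card hcon) (by omega)
      simp only [Finset.mem_insert, Finset.mem_singleton, not_or] at hh3
      obtain ⟨hne₁, hnf, hng⟩ := hh3
      obtain ⟨_, v, hvh, hve₁⟩ := adj_iff.1 (hs hh he₁ hne₁)
      rw [hab'] at hve₁
      rcases Sym2.mem_iff.1 hve₁ with hva | hvb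
      · -- a ∈ h; h adj f gives common vertex in {b, c}
        obtain ⟨_, w', hwh, hwf'⟩ := adj_iff.1 (hs hh hf hnf)
        rw [hfx] at hwf'
        rcases Sym2.mem_iff.1 hwf' with h1 | h1
        · -- w' = b, so a,b ∈ h, h = e₁
          apply hne₁
          apply Subtype.ext
          rw [eq_of_two_mem hab h (hva ▸ hvh) (h1 ▸ hwh), hab']
        · -- w' = c, so a,c ∈ h, h = g
          apply hng
          apply Subtype.ext
          rw [eq_of_two_mem (Ne.symm hca) h (hva ▸ hvh) (h1 ▸ hwh), hgy, hxy]
      · -- b ∈ h; h adj g gives common vertex in {a, c}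
        obtain ⟨_, w', hwh, hwg'⟩ := adj_iff.1 (hs hh hg hng)
        rw [hgy] at hwg'
        rcases Sym2.mem_iff.1 hwg' with h1 | h1
        · apply hne₁
          apply Subtype.ext
          have := eq_of_two_mem (Ne.symm hab) h (hvb ▸ hvh) (h1 ▸ hwh)
          rw [this, hab', Sym2.eq_swap]
        · apply hnf
          apply Subtype.ext
          have h1c : w' = c := by rw [h1, hxy]
          rw [eq_of_two_mem (Ne.symm hcb) h (hvb ▸ hvh) (h1c ▸ hwh), hfx]
    omega

lemma cliqueNum_eq (hn : 5 ≤ n) :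
    (⊤ : SimpleGraph (Fin n)).lineGraph.cliqueNum = n - 1 := by
  classical
  haveI : NeZero n := ⟨by omega⟩
  apply le_antisymm
  · obtain ⟨t, ht⟩ := (⊤ : SimpleGraph (Fin n)).lineGraph.exists_isNClique_cliqueNum
    rw [← ht.card_eq]
    exact clique_le hn t ht.isClique
  · -- star at 0
    set st : Finset (EE n) := (Finset.univ.erase (0 : Fin n)).attach.image
      (fun x => (⟨s((0 : Fin n), x.1), by
        rw [SimpleGraph.mem_edgeSet, top_adj]
        exact fun h => (Finset.mem_erase.1 x.2).1 h.symm⟩ : EE n)) with hst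
    have hcard : st.card = n - 1 := by
      rw [hst, Finset.card_image_of_injective, Finset.card_attach, Finset.card_erase_of_mem (Finset.mem_univ _), Finset.card_univ, Fintype.card_fin]
      intro x y hxy
      have := congrArg Subtype.val hxy
      simp only at this
      rcases Sym2.eq_iff.1 this with ⟨_, h⟩ | ⟨h1, h2⟩
      · exact Subtype.ext h
      · exact Subtype.ext (by rw [← h1, h2])
    have hclique : (⊤ : SimpleGraph (Fin n)).lineGraph.IsClique st := by
      intro e he f hf hef
      rw [adj_iff]
      refine ⟨hef, 0, ?_, ?_⟩
      · simp only [hst, Finset.mem_coe, Finset.mem_image] at he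
        obtain ⟨x, _, hx⟩ := he
        rw [← hx]; simp
      · simp only [hst, Finset.mem_coe, Finset.mem_image] at hf
        obtain ⟨x, _, hx⟩ := hf
        rw [← hx]; simp
    calc n - 1 = st.card := hcard.symm
    _ ≤ _ := hclique.card_le_cliqueNum

lemma matching_card (T : Finset (EE n))
    (hT : ∀ e ∈ T, ∀ f ∈ T, ¬ (⊤ : SimpleGraph (Fin n)).lineGraph.Adj e f) :
    2 * T.card ≤ n := by
  classical
  set g : EE n → Finset (Fin n) := fun e => Finset.univ.filter (· ∈ (e : Sym2 (Fin n))) with hg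
  have hcard : ∀ e : EE n, (g e).card = 2 := by
    intro e
    obtain ⟨a, b, hab, he⟩ := edge_exists e
    have : g e = {a, b} := by
      ext v
      simp [hg, he, Sym2.mem_iff]
    rw [this, Finset.card_insert_of_notMem (by simpa using hab), Finset.card_singleton]
  have hdisj : (T : Set (EE n)).PairwiseDisjoint g := by
    intro e he f hf hef
    simp only [Finset.disjoint_left]
    intro v hv hv'
    simp only [hg, Finset.mem_filter] at hv hv'
    exact hT e (by simpa using he) f (by simpa using hf) (adj_iff.2 ⟨hef, v, hv.2, hv'.2⟩)
  calc 2 * T.card = ∑ e ∈ T, (g e).card := by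
        rw [Finset.sum_congr rfl (fun e _ => hcard e), Finset.sum_const, smul_eq_mul, mul_comm]
    _ = (T.biUnion g).card := (Finset.card_biUnion hdisj).symm
    _ ≤ (Finset.univ : Finset (Fin n)).card := Finset.card_le_card (Finset.subset_univ _)
    _ = n := by simp

lemma card_EE (hn : 1 ≤ n) : 2 * Fintype.card (EE n) = n * (n - 1) := by
  classical
  have h1 : Fintype.card (EE n) = (⊤ : SimpleGraph (Fin n)).edgeFinset.card := by
    rw [SimpleGraph.edgeFinset, Set.toFinset_card]
  rw [h1, SimpleGraph.card_edgeFinset_top_eq_card_choose_two, Fintype.card_fin,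
    Nat.choose_two_right]
  have : 2 ∣ n * (n - 1) := by
    rcases Nat.even_or_odd n with h | h
    · exact Dvd.dvd.mul_right h.two_dvd _
    · exact Dvd.dvd.mul_left (Nat.Odd.sub_odd h odd_one).two_dvd _
  omega

def ecolor [NeZero n] (e : EE n) : Fin n :=
  Sym2.lift ⟨fun i j => i + j, fun i j => add_comm i j⟩ (e : Sym2 (Fin n))

lemma ecolor_proper [NeZero n] {e f : EE n}
    (h : (⊤ : SimpleGraph (Fin n)).lineGraph.Adj e f) : ecolor e ≠ ecolor f := by
  obtain ⟨hef, v, hve, hvf⟩ := adj_iff.1 h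
  obtain ⟨x, hx, hex⟩ := mem_pair_other e hve
  obtain ⟨y, hy, hfy⟩ := mem_pair_other f hvf
  intro hcol
  unfold ecolor at hcol
  rw [hex, hfy, Sym2.lift_mk, Sym2.lift_mk] at hcol
  exact hef (Subtype.ext (by rw [hex, hfy, add_left_cancel hcol]))

def ecoloring [NeZero n] : (⊤ : SimpleGraph (Fin n)).lineGraph.Coloring (Fin n) :=
  SimpleGraph.Coloring.mk ecolor (fun h => ecolor_proper h)

lemma colorable_lower (hn : 5 ≤ n) (hodd : Odd n) {m : ℕ}
    (hc : (⊤ : SimpleGraph (Fin n)).lineGraph.Colorable m) : n ≤ m := by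
  classical
  obtain ⟨C⟩ := hc
  obtain ⟨k, hk⟩ := hodd
  have hfiber : ∀ t : Fin m, ((Finset.univ : Finset (EE n)).filter (fun e => C e = t)).card ≤ k := by
    intro t
    have h2 : 2 * ((Finset.univ : Finset (EE n)).filter (fun e => C e = t)).card ≤ n := by
      apply matching_card
      intro e he f hf hadj
      have := C.valid hadj
      simp only [Finset.mem_filter] at he hf
      rw [he.2, hf.2] at this
      exact this rfl
    omega
  have hsum : Fintype.card (EE n) = ∑ t : Fin m, ((Finset.univ : Finset (EE n)).filter (fun e => C e = t)).card := by
    rw [← Finset.card_univ]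
    exact Finset.card_eq_sum_card_fiberwise (fun e _ => Finset.mem_univ _)
  have hNle : Fintype.card (EE n) ≤ m * k := by
    rw [hsum]
    calc ∑ t : Fin m, ((Finset.univ : Finset (EE n)).filter (fun e => C e = t)).card
        ≤ ∑ _t : Fin m, k := Finset.sum_le_sum (fun t _ => hfiber t)
      _ = m * k := by simp [Finset.sum_const, mul_comm]
  have h2N := card_EE (n := n) (by omega)
  have heq : n * (n - 1) = (2 * k + 1) * (2 * k) := by
    have h1 : n - 1 = 2 * k := by omega
    rw [h1, hk]
  have hfin : (2 * k + 1) * (2 * k) ≤ m * (2 * k) := by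
    calc (2 * k + 1) * (2 * k) = n * (n - 1) := heq.symm
      _ = 2 * Fintype.card (EE n) := h2N.symm
      _ ≤ 2 * (m * k) := by omega
      _ = m * (2 * k) := by ring
  have hkpos : 0 < 2 * k := by omega
  have := Nat.le_of_mul_le_mul_right hfin hkpos
  omega

lemma chrom_eq (hn : 5 ≤ n) (hodd : Odd n) :
    (⊤ : SimpleGraph (Fin n)).lineGraph.chromaticNumber = (n : ℕ∞) := by
  haveI : NeZero n := ⟨by omega⟩
  have hcol : (⊤ : SimpleGraph (Fin n)).lineGraph.Colorable n := ⟨ecoloring⟩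
  apply le_antisymm hcol.chromaticNumber_le
  by_contra hlt
  push_neg at hlt
  have h2 : (⊤ : SimpleGraph (Fin n)).lineGraph.chromaticNumber ≠ ⊤ := (hlt.trans_le le_top).ne
  set m := ENat.toNat ((⊤ : SimpleGraph (Fin n)).lineGraph.chromaticNumber) with hm
  have hmeq : ((m : ℕ∞)) = (⊤ : SimpleGraph (Fin n)).lineGraph.chromaticNumber := ENat.coe_toNat h2
  have hcm : (⊤ : SimpleGraph (Fin n)).lineGraph.Colorable m :=
    SimpleGraph.chromaticNumber_le_iff_colorable.1 hmeq.ge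
  have := colorable_lower hn hodd hcm
  rw [← hmeq] at hlt
  exact absurd (Nat.cast_le.2 this) (not_le.2 hlt)

-- membership of near-uniform points in the stable polytope
lemma near_mem (hn : 5 ≤ n) (y : EE n → ℝ)
    (hy : ∀ e, |y e - 1| < 1 / (2 * (Fintype.card (EE n) : ℝ) + 1)) :
    (fun e => y e / ((n : ℝ) + 1)) ∈ stablePolytope (⊤ : SimpleGraph (Fin n)).lineGraph := by
  classical
  haveI : NeZero n := ⟨by omega⟩
  set N : ℝ := (Fintype.card (EE n) : ℝ) with hN
  have hNn : 2 * Fintype.card (EE n) = n * (n - 1) := card_EE (by omega)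
  have hN1 : 1 ≤ N := by
    rw [hN]
    have h5 : 5 * 4 ≤ n * (n - 1) := Nat.mul_le_mul hn (by omega)
    have : 1 ≤ Fintype.card (EE n) := by omega
    exact_mod_cast this
  set ε : ℝ := 1 / (2 * N + 1) with hε
  have hεpos : 0 < ε := by positivity
  have hε1 : ε < 1 := by
    rw [hε, div_lt_one (by linarith)]
    linarith
  have hε2N : 2 * N * ε ≤ 1 - ε := by
    have heq : 2 * N * (1 / (2 * N + 1)) = 1 - 1 / (2 * N + 1) := by
      field_simp
      ring
    rw [hε, heq]
  set R : ℝ := (n : ℝ) + 1 with hR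
  have hRpos : 0 < R := by positivity
  set z : EE n → ℝ := fun e => y e / R with hz
  set μ : ℝ := (1 - ε) / R with hμ
  have hμpos : 0 < μ := div_pos (by linarith) hRpos
  have hylb : ∀ e, 1 - ε < y e := fun e => by
    have := abs_lt.1 (hy e); linarith [this.1]
  have hyub : ∀ e, y e < 1 + ε := fun e => by
    have := abs_lt.1 (hy e); linarith [this.2]
  have hzlb : ∀ e, μ < z e := fun e => by
    rw [hμ, hz]
    exact div_lt_div_of_pos_right (hylb e) hRpos
  have hzub : ∀ e, z e < (1 + ε) / R := fun e => by
    rw [hz]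
    exact div_lt_div_of_pos_right (hyub e) hRpos
  -- the convex combination
  set p : Option ((Fin n) ⊕ (EE n)) → (EE n → ℝ) := fun i => match i with
    | none => 0
    | some (Sum.inl t) => Set.indicator {e : EE n | ecolor e = t} (fun _ => (1:ℝ))
    | some (Sum.inr f) => Set.indicator {f} (fun _ => (1:ℝ)) with hp
  set w : Option ((Fin n) ⊕ (EE n)) → ℝ := fun i => match i with
    | none => 1 - (n : ℝ) * μ - ∑ e : EE n, (z e - μ)
    | some (Sum.inl _) => μ
    | some (Sum.inr f) => z f - μ with hw
  have hsumz : ∑ e : EE n, (z e - μ) = (∑ e : EE n, z e) - N * μ := by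
    rw [Finset.sum_sub_distrib, Finset.sum_const, Finset.card_univ, nsmul_eq_mul, hN]
  have hSub : ∑ e : EE n, z e ≤ N * ((1 + ε) / R) := by
    rw [hN]
    calc ∑ e : EE n, z e ≤ ∑ _e : EE n, ((1 + ε) / R) :=
          Finset.sum_le_sum (fun e _ => (hzub e).le)
      _ = _ := by rw [Finset.sum_const, Finset.card_univ, nsmul_eq_mul]
  have hw0 : ∀ i : Option ((Fin n) ⊕ (EE n)), 0 ≤ w i := by
    rintro (_ | t | f)
    · -- none
      show (0:ℝ) ≤ 1 - (n : ℝ) * μ - ∑ e : EE n, (z e - μ)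
      rw [hsumz]
      have : (n : ℝ) * μ + (∑ e : EE n, z e) - N * μ ≤ (n:ℝ) * ((1-ε)/R) + N * ((1+ε)/R) - N * ((1-ε)/R) := by
        rw [hμ]
        linarith [hSub]
      have hkey : (n:ℝ) * ((1-ε)/R) + N * ((1+ε)/R) - N * ((1-ε)/R) ≤ 1 := by
        rw [mul_div_assoc', mul_div_assoc', mul_div_assoc', ← add_div, div_sub_div_same,
          div_le_one hRpos]
        have hn' : (0:ℝ) ≤ (n:ℝ) * ε := by positivity
        nlinarith [hε2N, hεpos, hR]
      linarith
    · exact hμpos.le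
    · exact (sub_pos.2 (hzlb f)).le
  have hw1 : ∑ i : Option ((Fin n) ⊕ (EE n)), w i = 1 := by
    rw [Fintype.sum_option, Fintype.sum_sum_type]
    show (1 - (n : ℝ) * μ - ∑ e : EE n, (z e - μ)) + ((∑ _t : Fin n, μ) + ∑ f : EE n, (z f - μ)) = 1
    rw [Finset.sum_const, Finset.card_univ, Fintype.card_fin, nsmul_eq_mul]
    ring
  have hcoord : ∑ i : Option ((Fin n) ⊕ (EE n)), w i • p i = z := by
    funext f
    rw [Finset.sum_apply]
    rw [Fintype.sum_option, Fintype.sum_sum_type]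
    have h0 : (w none • p none) f = 0 := by simp [hp]
    have h1 : ∑ t : Fin n, (w (some (Sum.inl t)) • p (some (Sum.inl t))) f = μ := by
      have : ∀ t : Fin n, (w (some (Sum.inl t)) • p (some (Sum.inl t))) f
          = μ * (if ecolor f = t then (1:ℝ) else 0) := by
        intro t
        simp only [hw, hp, Pi.smul_apply, smul_eq_mul, Set.indicator_apply, Set.mem_setOf_eq]
      rw [Finset.sum_congr rfl (fun t _ => this t)]
      rw [← Finset.mul_sum]
      rw [Finset.sum_ite_eq (Finset.univ) (ecolor f) (fun _ => (1:ℝ))]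
      simp
    have h2 : ∑ e : EE n, (w (some (Sum.inr e)) • p (some (Sum.inr e))) f = z f - μ := by
      have : ∀ e : EE n, (w (some (Sum.inr e)) • p (some (Sum.inr e))) f
          = (z e - μ) * (if f = e then (1:ℝ) else 0) := by
        intro e
        simp only [hw, hp, Pi.smul_apply, smul_eq_mul, Set.indicator_apply, Set.mem_singleton_iff]
      rw [Finset.sum_congr rfl (fun e _ => this e)]
      rw [Finset.sum_eq_single f]
      · simp
      · intro b _ hb
        simp [Ne.symm hb]
      · intro h
        exact absurd (Finset.mem_univ f) h
    rw [h0, h1, h2]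
    ring
  have hpmem : ∀ i : Option ((Fin n) ⊕ (EE n)), p i ∈ {x : EE n → ℝ | ∃ S : Set (EE n),
      (∀ u ∈ S, ∀ v ∈ S, ¬ (⊤ : SimpleGraph (Fin n)).lineGraph.Adj u v) ∧
      x = S.indicator (fun _ => (1 : ℝ))} := by
    rintro (_ | t | f)
    · exact ⟨∅, by simp, by funext x; simp [hp]⟩
    · refine ⟨{e : EE n | ecolor e = t}, ?_, rfl⟩
      intro u hu v hv hadj
      exact ecolor_proper hadj (by rw [Set.mem_setOf_eq] at hu hv; rw [hu, hv])
    · refine ⟨{f}, ?_, rfl⟩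
      intro u hu v hv hadj
      rw [Set.mem_singleton_iff] at hu hv
      rw [hu, hv] at hadj
      exact (⊤ : SimpleGraph (Fin n)).lineGraph.irrefl hadj
  have := Finset.centerMass_mem_convexHull (Finset.univ : Finset (Option ((Fin n) ⊕ (EE n))))
    (fun i _ => hw0 i) (by rw [hw1]; norm_num) (fun i _ => hpmem i)
  rw [Finset.centerMass, hw1, inv_one, one_smul, hcoord] at this
  exact this

lemma one_mem_interior (hn : 5 ≤ n) :
    (fun _ => (1:ℝ)) ∈ interior (dilate (n+1)
      (stablePolytope (⊤ : SimpleGraph (Fin n)).lineGraph)) := by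
  set ε : ℝ := 1 / (2 * (Fintype.card (EE n) : ℝ) + 1) with hε
  have hεpos : 0 < ε := by positivity
  have hball : Metric.ball (fun _ => (1:ℝ) : EE n → ℝ) ε ⊆
      dilate (n+1) (stablePolytope (⊤ : SimpleGraph (Fin n)).lineGraph) := by
    intro y hy
    have hcoord : ∀ e, |y e - 1| < ε := by
      intro e
      have h1 : dist (y e) 1 ≤ dist y (fun _ => (1:ℝ)) := dist_le_pi_dist y (fun _ => (1:ℝ)) e
      have h2 : dist y (fun _ => (1:ℝ)) < ε := Metric.mem_ball.1 hy
      rw [Real.dist_eq] at h1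
      linarith
    have hz := near_mem hn y hcoord
    refine ⟨fun e => y e / ((n : ℝ) + 1), hz, ?_⟩
    funext e
    have hne : ((n : ℝ) + 1) ≠ 0 := by positivity
    show ((((n+1) : ℕ)) : ℝ) * (y e / ((n : ℝ) + 1)) = y e
    push_cast
    field_simp
  exact interior_maximal hball Metric.isOpen_ball (Metric.mem_ball_self hεpos)

lemma polytope_subset (hn : 5 ≤ n) (hodd : Odd n) :
    stablePolytope (⊤ : SimpleGraph (Fin n)).lineGraph ⊆
      {x : EE n → ℝ | (∀ e, 0 ≤ x e) ∧ ∑ e : EE n, x e ≤ ((n:ℝ) - 1)/2} := by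
  classical
  apply convexHull_min
  · rintro x ⟨S, hS, rfl⟩
    constructor
    · intro e
      rw [Set.indicator_apply]
      split <;> norm_num
    · set T : Finset (EE n) := Finset.univ.filter (· ∈ S) with hT
      have hsum : ∑ e : EE n, S.indicator (fun _ => (1:ℝ)) e = (T.card : ℝ) := by
        rw [hT]
        rw [← Finset.sum_boole]
        apply Finset.sum_congr rfl
        intro e _
        rw [Set.indicator_apply]
      rw [hsum]
      have h2 : 2 * T.card ≤ n := by
        apply matching_card
        intro e he f hf
        simp only [hT, Finset.mem_filter] at he hf
        exact hS e he.2 f hf.2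
      obtain ⟨k, hk⟩ := hodd
      have hTk : T.card ≤ k := by omega
      have : ((n:ℝ) - 1)/2 = (k : ℝ) := by
        rw [hk]; push_cast; ring
      rw [this]
      exact_mod_cast hTk
  · rintro x hx y hy a b ha hb hab
    constructor
    · intro e
      have := hx.1 e; have := hy.1 e
      simp only [Pi.add_apply, Pi.smul_apply, smul_eq_mul]
      nlinarith
    · have hsm : ∑ e : EE n, (a • x + b • y) e = a * ∑ e : EE n, x e + b * ∑ e : EE n, y e := by
        simp only [Pi.add_apply, Pi.smul_apply, smul_eq_mul]
        rw [Finset.sum_add_distrib, Finset.mul_sum, Finset.mul_sum]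
      rw [hsm]
      have hBB : a * (((n:ℝ)-1)/2) + b * (((n:ℝ)-1)/2) = ((n:ℝ)-1)/2 := by
        rw [← add_mul, hab, one_mul]
      linarith [mul_le_mul_of_nonneg_left hx.2 ha, mul_le_mul_of_nonneg_left hy.2 hb]

lemma no_lattice (hn : 5 ≤ n) (hodd : Odd n) {k : ℕ} (hk0 : 0 < k) (hkn : k ≤ n)
    (x : EE n → ℝ) (hx : IsLatticePt x)
    (hmem : x ∈ interior (dilate k (stablePolytope (⊤ : SimpleGraph (Fin n)).lineGraph))) :
    False := by
  classical
  have hsub := polytope_subset hn hodd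
  have hdil : dilate k (stablePolytope (⊤ : SimpleGraph (Fin n)).lineGraph) ⊆
      {v : EE n → ℝ | (∀ e, 0 ≤ v e) ∧ ∑ e : EE n, v e ≤ (k:ℝ) * (((n:ℝ) - 1)/2)} := by
    rintro v ⟨u, hu, rfl⟩
    obtain ⟨hu1, hu2⟩ := hsub hu
    constructor
    · intro e
      simp only [Pi.smul_apply, smul_eq_mul]
      have := hu1 e
      positivity
    · have : ∑ e : EE n, ((k:ℝ) • u) e = (k:ℝ) * ∑ e : EE n, u e := by
        simp only [Pi.smul_apply, smul_eq_mul]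
        rw [Finset.mul_sum]
      rw [this]
      have hk' : (0:ℝ) ≤ (k:ℝ) := by positivity
      nlinarith
  obtain ⟨δ, hδpos, hball⟩ := Metric.mem_nhds_iff.1 (mem_interior_iff_mem_nhds.1 hmem)
  have hball' : Metric.ball x δ ⊆
      {v : EE n → ℝ | (∀ e, 0 ≤ v e) ∧ ∑ e : EE n, v e ≤ (k:ℝ) * (((n:ℝ) - 1)/2)} :=
    fun v hv => hdil (hball hv)
  -- each coordinate ≥ 1
  have hcoord1 : ∀ e, (1:ℝ) ≤ x e := by
    intro e
    have hx' : Function.update x e (x e - δ/2) ∈ Metric.ball x δ := by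
      rw [Metric.mem_ball, dist_pi_lt_iff hδpos]
      intro i
      by_cases hi : i = e
      · subst hi
        rw [Function.update_self, Real.dist_eq]
        rw [abs_of_nonpos (by linarith)]
        linarith
      · rw [Function.update_of_ne hi, Real.dist_eq]
        simp [hδpos]
    have h0 := (hball' hx').1 e
    rw [Function.update_self] at h0
    obtain ⟨m, hm⟩ := hx e
    have hmpos : (0:ℤ) < m := by
      have : (0:ℝ) < (m:ℝ) := by rw [← hm]; linarith
      exact_mod_cast this
    rw [hm]
    exact_mod_cast hmpos
  -- strict sum bound
  have hsumlt : ∑ e : EE n, x e < (k:ℝ) * (((n:ℝ) - 1)/2) := by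
    have hx'' : (fun e => x e + δ/2) ∈ Metric.ball x δ := by
      rw [Metric.mem_ball, dist_pi_lt_iff hδpos]
      intro i
      rw [Real.dist_eq]
      rw [abs_of_nonneg (by linarith)]
      linarith
    have h0 := (hball' hx'').2
    have hNpos : 0 < Fintype.card (EE n) := by
      have := card_EE (n := n) (by omega)
      have h5 : 5 * 4 ≤ n * (n - 1) := Nat.mul_le_mul hn (by omega)
      omega
    have hsum' : ∑ e : EE n, (x e + δ/2) = (∑ e : EE n, x e) + (Fintype.card (EE n) : ℝ) * (δ/2) := by
      rw [Finset.sum_add_distrib, Finset.sum_const, Finset.card_univ, nsmul_eq_mul]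
    rw [hsum'] at h0
    have : (0:ℝ) < (Fintype.card (EE n) : ℝ) * (δ/2) := by positivity
    linarith
  have hsumge : (Fintype.card (EE n) : ℝ) ≤ ∑ e : EE n, x e := by
    calc (Fintype.card (EE n) : ℝ) = ∑ _e : EE n, (1:ℝ) := by
          rw [Finset.sum_const, Finset.card_univ, nsmul_eq_mul, mul_one]
      _ ≤ ∑ e : EE n, x e := Finset.sum_le_sum (fun e _ => hcoord1 e)
  have hNval : 2 * (Fintype.card (EE n) : ℝ) = (n:ℝ) * ((n:ℝ) - 1) := by
    have h := card_EE (n := n) (by omega)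
    have h2 : ((2 * Fintype.card (EE n) : ℕ) : ℝ) = ((n * (n-1) : ℕ) : ℝ) := by
      exact_mod_cast h
    push_cast [Nat.cast_sub (by omega : 1 ≤ n)] at h2
    linarith
  have hkn' : (k:ℝ) ≤ (n:ℝ) := by exact_mod_cast hkn
  have hn1 : (0:ℝ) ≤ (n:ℝ) - 1 := by
    have : (1:ℝ) ≤ (n:ℝ) := by exact_mod_cast (by omega : 1 ≤ n)
    linarith
  nlinarith


lemma codeg_eq (hn : 5 ≤ n) (hodd : Odd n) :
    codeg (stablePolytope (⊤ : SimpleGraph (Fin n)).lineGraph) = n + 1 := by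
  have hmem : n + 1 ∈ {k | 0 < k ∧ ∃ x, IsLatticePt x ∧
      x ∈ interior (dilate k (stablePolytope (⊤ : SimpleGraph (Fin n)).lineGraph))} :=
    ⟨by omega, fun _ => 1, fun e => ⟨1, by norm_num⟩, one_mem_interior hn⟩
  apply le_antisymm
  · exact Nat.sInf_le hmem
  · apply le_csInf ⟨n + 1, hmem⟩
    rintro k ⟨hk0, x, hlat, hint⟩
    by_contra hlt
    push_neg at hlt
    exact no_lattice hn hodd hk0 (by omega) x hlat hint

end Aux

/-- For odd `n ≥ 5` and `G = L(K_n)` the line graph of the complete graph `K_n`: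
`ω(G) + 1 = n < codeg(P_G) = χ(G) + 1 = n + 1`. -/
theorem stmt18 (n : ℕ) (hn : 5 ≤ n) (hodd : Odd n) :
    ((⊤ : SimpleGraph (Fin n)).lineGraph.cliqueNum + 1 = n) ∧
    codeg (stablePolytope (⊤ : SimpleGraph (Fin n)).lineGraph) = n + 1 ∧
    (⊤ : SimpleGraph (Fin n)).lineGraph.chromaticNumber = (n : ℕ∞) := by
  refine ⟨?_, codeg_eq hn hodd, chrom_eq hn hodd⟩
  rw [cliqueNum_eq hn]
  omega
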